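/- Evaluating the Lah polynomial at alternating signs gives the signed Lah numbers: L_{n,k}((−1)¹, (−1)², …, (−1)^{n−k+1}) = (−1)^n · (n!/k!) · binomial(n−1,k−1), for 1 ≤ k ≤ n. -/

import Mathlib

open Finset MvPolynomial

/-- The set of (n,k)-partition types: tuples (r₁,…,rₙ) (rⱼ = r (j-1)) with Σ rᵢ = k, Σ i·rᵢ = n. -/
def ptypes (n k : ℕ) : Finset (Fin n → ℕ) :=
  (Fintype.piFinset fun _ : Fin n => Finset.range (n + 1)).filter
    fun r => (∑ i, r i) = k ∧ (∑ i, (i.1 + 1) * r i) = n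

/-- Denominator of the Faà di Bruno coefficient: ∏ rᵢ!·(i!)^{rᵢ}. -/
def bruDenom {n : ℕ} (r : Fin n → ℕ) : ℕ :=
  ∏ i, (r i).factorial * ((i.1 + 1).factorial) ^ (r i)

/-- Partial exponential Bell polynomial (variable `X j` stands for X_{j+1}). -/
noncomputable def Bell (n k : ℕ) : MvPolynomial ℕ ℤ :=
  ∑ r ∈ ptypes n k,
    C ((n.factorial / bruDenom r : ℕ) : ℤ) * ∏ i, (X i.1 : MvPolynomial ℕ ℤ) ^ (r i)

/-- Associated Bell polynomial: Bell with X₁ (= `X 0`) set to 0. -/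
noncomputable def BellT (n k : ℕ) : MvPolynomial ℕ ℤ :=
  aeval (fun j => if j = 0 then 0 else (X j : MvPolynomial ℕ ℤ)) (Bell n k)

/-- Signed Stirling numbers of the first kind. -/
def s1 : ℕ → ℕ → ℤ
  | 0, 0 => 1
  | 0, _ + 1 => 0
  | _ + 1, 0 => 0
  | n + 1, k + 1 => s1 n k - n * s1 n (k + 1)

/-- Stirling numbers of the second kind. -/
def s2 : ℕ → ℕ → ℤ
  | 0, 0 => 1
  | 0, _ + 1 => 0
  | _ + 1, 0 => 0
  | n + 1, k + 1 => s2 n k + (k + 1) * s2 n (k + 1)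

/-- Unsigned Stirling numbers of the first kind (cycle numbers). -/
def cyc : ℕ → ℕ → ℕ
  | 0, 0 => 1
  | 0, _ + 1 => 0
  | _ + 1, 0 => 0
  | n + 1, k + 1 => cyc n k + n * cyc n (k + 1)

/-- First entry r₁ of a partition type (0 if the tuple is empty). -/
def firstEntry {m : ℕ} (r : Fin m → ℕ) : ℕ :=
  ∑ i ∈ Finset.univ.filter (fun i : Fin m => i.1 = 0), r i

/-- Multivariate Stirling polynomials of the first kind, via the differential recurrence. -/
noncomputable def Spoly : ℕ → ℕ → MvPolynomial ℕ ℤ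
  | 0, _ => 0
  | 1, k => if k = 1 then 1 else 0
  | n + 2, k =>
    if k = 0 then 0 else
      C (-(2 * (n : ℤ) + 1)) * X 1 * Spoly (n + 1) k
        + X 0 * (Spoly (n + 1) (k - 1)
          + ∑ j ∈ Finset.Icc 1 ((n + 1) - k + 1),
              X j * pderiv (j - 1) (Spoly (n + 1) k))

/-- Lah polynomials. -/
noncomputable def Lah (n k : ℕ) : MvPolynomial ℕ ℤ :=
  ∑ r ∈ ptypes n k,
    C ((n.factorial / ∏ i, (r i).factorial : ℕ) : ℤ) * ∏ i, (X i.1 : MvPolynomial ℕ ℤ) ^ (r i)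

section Aux

/-- `ptypes` as a filtered `piAntidiag`. -/
lemma ptypes_eq (n k : ℕ) :
    ptypes n k = (Finset.piAntidiag (Finset.univ : Finset (Fin n)) k).filter
      (fun r => (∑ i, (i.1 + 1) * r i) = n) := by
  ext r
  rw [ptypes, Finset.mem_filter, Finset.mem_filter, Finset.mem_piAntidiag,
    Fintype.mem_piFinset]
  constructor
  · rintro ⟨-, h1, h2⟩; exact ⟨⟨h1, fun _ _ => Finset.mem_univ _⟩, h2⟩
  · rintro ⟨⟨h1, -⟩, h2⟩
    refine ⟨fun i => Finset.mem_range.mpr (Nat.lt_succ_of_le ?_), h1, h2⟩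
    calc r i ≤ (i.1 + 1) * r i := Nat.le_mul_of_pos_left _ (Nat.succ_pos _)
    _ ≤ ∑ j, (j.1 + 1) * r j :=
        Finset.single_le_sum (f := fun j : Fin n => (j.1 + 1) * r j)
          (fun _ _ => Nat.zero_le _) (Finset.mem_univ i)
    _ = n := h2

/-- Key combinatorial identity: the sum of multinomial coefficients over partition types
equals a binomial coefficient (it counts compositions of `n` into `k` parts). -/
lemma sum_multinomial_ptypes (n k : ℕ) (hk : 1 ≤ k) (hkn : k ≤ n) :
    ∑ r ∈ ptypes n k, Nat.multinomial Finset.univ r = (n - 1).choose (k - 1) := by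
  have key : ((∑ r ∈ ptypes n k, Nat.multinomial Finset.univ r : ℕ) : ℤ)
      = (((n - 1).choose (k - 1) : ℕ) : ℤ) := by
    set S : PowerSeries ℤ :=
      ∑ i : Fin n, (PowerSeries.X : PowerSeries ℤ) ^ (i.1 + 1) with hS
    -- coefficient n of S^k is the LHS
    have h1 : (PowerSeries.coeff (R := ℤ) n) (S ^ k)
        = ((∑ r ∈ ptypes n k, Nat.multinomial Finset.univ r : ℕ) : ℤ) := by
      rw [hS, Finset.sum_pow_eq_sum_piAntidiag, map_sum]
      rw [ptypes_eq, Finset.sum_filter, Nat.cast_sum]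
      refine Finset.sum_congr rfl fun r hr => ?_
      have hmon : ∏ i : Fin n, ((PowerSeries.X : PowerSeries ℤ) ^ (i.1 + 1)) ^ r i
          = (PowerSeries.X : PowerSeries ℤ) ^ (∑ i : Fin n, (i.1 + 1) * r i) := by
        calc ∏ i : Fin n, ((PowerSeries.X : PowerSeries ℤ) ^ (i.1 + 1)) ^ r i
            = ∏ i : Fin n, (PowerSeries.X : PowerSeries ℤ) ^ ((i.1 + 1) * r i) :=
              Finset.prod_congr rfl fun i _ => (pow_mul _ _ _).symm
          _ = _ := Finset.prod_pow_eq_pow_sum _ _ _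
      have hcast : ((Nat.multinomial Finset.univ r : ℕ) : PowerSeries ℤ)
          = PowerSeries.C (R := ℤ) ((Nat.multinomial Finset.univ r : ℕ) : ℤ) := by
        simp [PowerSeries.C_eq_algebraMap, map_natCast]
      rw [hmon, hcast, PowerSeries.coeff_C_mul, PowerSeries.coeff_X_pow]
      by_cases h : (∑ i : Fin n, (i.1 + 1) * r i) = n
      · rw [if_pos h.symm, if_pos h, mul_one]
      · rw [if_neg (fun hh => h hh.symm), if_neg h, mul_zero, Nat.cast_zero]
    -- S agrees with X * mk 1 up to degree n
    have hdvd : (PowerSeries.X : PowerSeries ℤ) ^ (n + 1)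
        ∣ PowerSeries.X * PowerSeries.mk 1 - S := by
      rw [PowerSeries.X_pow_dvd_iff]
      intro m hm
      rw [map_sub, hS, map_sum]
      have hXmk : (PowerSeries.coeff (R := ℤ) m)
          ((PowerSeries.X : PowerSeries ℤ) * PowerSeries.mk 1) =
          if m = 0 then 0 else 1 := by
        rcases m with _ | m
        · simp
        · rw [mul_comm, PowerSeries.coeff_succ_mul_X, PowerSeries.coeff_mk]
          simp
      have hScoeff : ∑ i : Fin n,
          (PowerSeries.coeff (R := ℤ) m) ((PowerSeries.X : PowerSeries ℤ) ^ (i.1 + 1))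
          = if m = 0 then 0 else 1 := by
        simp only [PowerSeries.coeff_X_pow]
        rcases Nat.eq_zero_or_pos m with rfl | hm0
        · simp
        · have hmn : m - 1 < n := by omega
          rw [if_neg (show ¬ m = 0 by omega)]
          rw [Finset.sum_eq_single (⟨m - 1, hmn⟩ : Fin n)]
          · exact if_pos (show m = m - 1 + 1 by omega)
          · intro b _ hb
            exact if_neg (fun hmb => hb (Fin.ext (show b.1 = m - 1 by omega)))
          · intro h; exact absurd (Finset.mem_univ _) h
      rw [hXmk, hScoeff, sub_self]
    have h2 : (PowerSeries.coeff (R := ℤ) n) (S ^ k)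
        = (PowerSeries.coeff (R := ℤ) n)
          (((PowerSeries.X : PowerSeries ℤ) * PowerSeries.mk 1) ^ k) := by
      have hd : (PowerSeries.X : PowerSeries ℤ) ^ (n + 1)
          ∣ ((PowerSeries.X : PowerSeries ℤ) * PowerSeries.mk 1) ^ k - S ^ k :=
        hdvd.trans (sub_dvd_pow_sub_pow _ _ k)
      rw [PowerSeries.X_pow_dvd_iff] at hd
      have hcn := hd n (Nat.lt_succ_self n)
      rw [map_sub, sub_eq_zero] at hcn
      exact hcn.symm
    have h3 : (PowerSeries.coeff (R := ℤ) n)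
        (((PowerSeries.X : PowerSeries ℤ) * PowerSeries.mk 1) ^ k)
        = (((n - 1).choose (k - 1) : ℕ) : ℤ) := by
      have hk1 : k = (k - 1) + 1 := by omega
      rw [mul_pow, mul_comm, PowerSeries.coeff_mul_X_pow' _ k n, if_pos hkn,
        hk1, PowerSeries.mk_one_pow_eq_mk_choose_add, PowerSeries.coeff_mk]
      congr 2
      omega
    rw [h1.symm.trans (h2.trans h3)]
  exact_mod_cast key

end Aux

theorem lah_eval_alternating (n k : ℕ) (hk : 1 ≤ k) (hkn : k ≤ n) :
    eval (fun i => (-1 : ℤ) ^ (i + 1)) (Lah n k) =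
      (-1) ^ n * ((n.factorial / k.factorial : ℕ) : ℤ) * ((n - 1).choose (k - 1)) := by
  rw [Lah, map_sum]
  have step : ∀ r ∈ ptypes n k,
      eval (fun i => (-1 : ℤ) ^ (i + 1))
          (C ((n.factorial / ∏ i, (r i).factorial : ℕ) : ℤ) *
            ∏ i, (X i.1 : MvPolynomial ℕ ℤ) ^ (r i))
        = (-1) ^ n * ((n.factorial / k.factorial : ℕ) : ℤ)
            * (Nat.multinomial Finset.univ r : ℤ) := by
    intro r hr
    simp only [ptypes, Finset.mem_filter] at hr
    obtain ⟨-, hsum, hwt⟩ := hr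
    have hevalmon : eval (fun i => (-1 : ℤ) ^ (i + 1))
        (∏ i, (X i.1 : MvPolynomial ℕ ℤ) ^ (r i)) = (-1) ^ n := by
      rw [map_prod]
      simp only [map_pow, eval_X]
      calc ∏ i : Fin n, ((-1 : ℤ) ^ (i.1 + 1)) ^ r i
          = ∏ i : Fin n, (-1 : ℤ) ^ ((i.1 + 1) * r i) :=
            Finset.prod_congr rfl fun i _ => (pow_mul _ _ _).symm
        _ = (-1 : ℤ) ^ (∑ i : Fin n, (i.1 + 1) * r i) := Finset.prod_pow_eq_pow_sum _ _ _
        _ = (-1 : ℤ) ^ n := by rw [hwt]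
    have hcoeff : (n.factorial / ∏ i, (r i).factorial : ℕ)
        = (n.factorial / k.factorial) * Nat.multinomial Finset.univ r := by
      have hprod_dvd : (∏ i, (r i).factorial) ∣ k.factorial := by
        have h := Nat.prod_factorial_dvd_factorial_sum Finset.univ r
        rwa [hsum] at h
      have hk_dvd : k.factorial ∣ n.factorial := Nat.factorial_dvd_factorial hkn
      have hmult : Nat.multinomial Finset.univ r = k.factorial / ∏ i, (r i).factorial := by
        rw [Nat.multinomial, hsum]
      rw [hmult, ← Nat.mul_div_assoc _ hprod_dvd, Nat.div_mul_cancel hk_dvd]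
    rw [map_mul, eval_C, hevalmon, hcoeff]
    push_cast
    ring
  rw [Finset.sum_congr rfl step, ← Finset.mul_sum, ← Nat.cast_sum,
    sum_multinomial_ptypes n k hk hkn]
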